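/- arXiv:2211.06809 — 2 statements merged into one kernel-verified Lean document; each statement's English description precedes it below -/
import Mathlib

section
/- For all real numbers a and b, |tanh(a+b) − tanh(a−b)| ≤ 2 tanh|b|. -/
/-- for all real numbers a and b, `|tanh(a+b) − tanh(a−b)| ≤ 2 tanh|b|`. -/
theorem abs_tanh_add_sub_tanh_sub_le (a b : ℝ) :
    |Real.tanh (a + b) - Real.tanh (a - b)| ≤ 2 * Real.tanh |b| := by
  have h1 := Real.cosh_pos (a + b)
  have h2 := Real.cosh_pos (a - b)
  have hb := Real.cosh_pos b
  rw [Real.tanh_eq_sinh_div_cosh, Real.tanh_eq_sinh_div_cosh, Real.tanh_eq_sinh_div_cosh]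
  rw [div_sub_div _ _ (ne_of_gt h1) (ne_of_gt h2), abs_div,
    abs_of_pos (mul_pos h1 h2), div_le_iff₀ (mul_pos h1 h2)]
  have hnum : Real.sinh (a + b) * Real.cosh (a - b) - Real.cosh (a + b) * Real.sinh (a - b)
      = Real.sinh (2 * b) := by
    rw [show (2 : ℝ) * b = (a + b) - (a - b) by ring]
    exact (Real.sinh_sub _ _).symm
  rw [hnum]
  have hca : Real.cosh |b| = Real.cosh b := Real.cosh_abs b
  have hsa : Real.sinh |b| = |Real.sinh b| := by
    rcases le_or_gt 0 b with h | h
    · rw [abs_of_nonneg h, abs_of_nonneg (by simpa using Real.sinh_nonneg_iff.mpr h)]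
    · rw [abs_of_neg h, Real.sinh_neg, abs_of_neg (by simpa using Real.sinh_neg_iff.mpr h)]
  rw [hca, hsa]
  have h2b : |Real.sinh (2 * b)| = 2 * |Real.sinh b| * Real.cosh b := by
    rw [Real.sinh_two_mul, abs_mul, abs_mul, abs_of_pos hb, abs_two]
  rw [h2b]
  have key : Real.cosh b * Real.cosh b ≤ Real.cosh (a + b) * Real.cosh (a - b) := by
    rw [Real.cosh_add, Real.cosh_sub]
    nlinarith [Real.cosh_sq a, Real.cosh_sq b, sq_nonneg (Real.sinh a),
      sq_nonneg (Real.sinh b), Real.cosh_pos a]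
  have h3 : |Real.sinh b| / Real.cosh b * (Real.cosh b * Real.cosh b)
      ≤ |Real.sinh b| / Real.cosh b * (Real.cosh (a + b) * Real.cosh (a - b)) :=
    mul_le_mul_of_nonneg_left key (by positivity)
  have h4 : |Real.sinh b| / Real.cosh b * (Real.cosh b * Real.cosh b)
      = |Real.sinh b| * Real.cosh b := by
    field_simp
  nlinarith [h3, h4]
end

section
/- Let σ ∈ {-1,+1}^V, let x ∈ V, and let σ^x denote the configuration obtained from σ by flipping only the spin at x. Then for every y ∈ V with y ≠ x, the ε-SCA local transition probabilities satisfy |p̃_{y,ε}(+1 | σ) − p̃_{y,ε}(+1 | σ^x)| ≤ ε · tanh(β |J_{x,y}| / 2). -/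
open Real Finset

variable {V : Type*}

/-- The real value of a Boolean spin: `true ↦ +1`, `false ↦ -1`. -/
def sp (b : Bool) : ℝ := if b then 1 else -1

/-- The cavity field `h̃_x(σ) = ∑_y J_{x,y} σ_y + h_x`. -/
noncomputable def cavity [Fintype V] (J : V → V → ℝ) (h : V → ℝ) (σ : V → Bool) (x : V) : ℝ :=
  (∑ y, J x y * sp (σ y)) + h x

/-- The pinning-free local probability
`p_{x,0}(s|σ) = e^{(β/2) h̃_x(σ) s} / (2 cosh((β/2) h̃_x(σ)))`. -/
noncomputable def plocal [Fintype V] (J : V → V → ℝ) (h : V → ℝ) (β : ℝ)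
    (σ : V → Bool) (x : V) (s : Bool) : ℝ :=
  Real.exp ((β / 2) * cavity J h σ x * sp s) / (2 * Real.cosh ((β / 2) * cavity J h σ x))

/-- The ε-SCA local transition probability
`p̃_{x,ε}(s|σ) = (1-ε) δ_{σ_x,s} + ε p_{x,0}(s|σ)`. -/
noncomputable def ptilde [Fintype V] (J : V → V → ℝ) (h : V → ℝ) (β ε : ℝ)
    (σ : V → Bool) (x : V) (s : Bool) : ℝ :=
  (1 - ε) * (if σ x = s then 1 else 0) + ε * plocal J h β σ x s

lemma cosh_sq_half_le' (a b : ℝ) : Real.cosh ((a-b)/2)^2 ≤ Real.cosh a * Real.cosh b := by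
  have h1 : Real.cosh a * Real.cosh b = (Real.cosh (a+b) + Real.cosh (a-b))/2 := by
    rw [Real.cosh_add, Real.cosh_sub]; ring
  have h2 : Real.cosh (a-b) = Real.cosh ((a-b)/2)^2 + Real.sinh ((a-b)/2)^2 := by
    rw [show a - b = 2*((a-b)/2) by ring, Real.cosh_two_mul]; ring_nf
  nlinarith [Real.one_le_cosh (a+b), Real.sinh_sq ((a-b)/2)]

lemma tanh_sub_eq' (a b : ℝ) :
    Real.tanh a - Real.tanh b = Real.sinh (a-b) / (Real.cosh a * Real.cosh b) := by
  have hca := Real.cosh_pos a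
  have hcb := Real.cosh_pos b
  rw [Real.tanh_eq_sinh_div_cosh, Real.tanh_eq_sinh_div_cosh,
    div_sub_div _ _ hca.ne' hcb.ne', Real.sinh_sub]

lemma tanh_sub_le' {a b : ℝ} (hab : b ≤ a) :
    Real.tanh a - Real.tanh b ≤ 2 * Real.tanh ((a-b)/2) := by
  have hca := Real.cosh_pos a
  have hcb := Real.cosh_pos b
  have hch := Real.cosh_pos ((a-b)/2)
  have hs2 : 0 ≤ Real.sinh ((a-b)/2) := Real.sinh_nonneg_iff.2 (by linarith)
  have hsinh : Real.sinh (a-b) = 2 * Real.sinh ((a-b)/2) * Real.cosh ((a-b)/2) := by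
    rw [show a - b = 2*((a-b)/2) by ring, Real.sinh_two_mul]; ring
  rw [tanh_sub_eq', Real.tanh_eq_sinh_div_cosh, hsinh]
  have hle := cosh_sq_half_le' a b
  calc 2 * Real.sinh ((a-b)/2) * Real.cosh ((a-b)/2) / (Real.cosh a * Real.cosh b)
      ≤ 2 * Real.sinh ((a-b)/2) * Real.cosh ((a-b)/2) / (Real.cosh ((a-b)/2)^2) := by
        apply div_le_div_of_nonneg_left (by positivity) (by positivity) hle
    _ = 2 * (Real.sinh ((a-b)/2) / Real.cosh ((a-b)/2)) := by
        field_simp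

lemma abs_tanh_sub_le' (a b : ℝ) :
    |Real.tanh a - Real.tanh b| ≤ 2 * Real.tanh (|a-b|/2) := by
  rcases le_total b a with hh | hh
  · have h1 : 0 ≤ Real.tanh a - Real.tanh b := by
      rw [tanh_sub_eq']
      have := Real.sinh_nonneg_iff.2 (sub_nonneg.2 hh)
      positivity
    rw [abs_of_nonneg h1, abs_of_nonneg (sub_nonneg.2 hh)]
    exact tanh_sub_le' hh
  · have h1 : 0 ≤ Real.tanh b - Real.tanh a := by
      rw [tanh_sub_eq']
      have := Real.sinh_nonneg_iff.2 (sub_nonneg.2 hh)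
      positivity
    rw [abs_sub_comm, abs_of_nonneg h1, abs_sub_comm a b, abs_of_nonneg (sub_nonneg.2 hh)]
    exact tanh_sub_le' hh

lemma plocal_true_eq [Fintype V] (J : V → V → ℝ) (h : V → ℝ) (β : ℝ)
    (σ : V → Bool) (y : V) :
    plocal J h β σ y true = (1 + Real.tanh ((β / 2) * cavity J h σ y)) / 2 := by
  unfold plocal
  set t := (β / 2) * cavity J h σ y with ht
  have hc := Real.cosh_pos t
  rw [Real.tanh_eq_sinh_div_cosh]
  rw [show sp true = 1 from rfl, mul_one]
  rw [div_eq_div_iff (by positivity) (by norm_num)]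
  field_simp
  nlinarith [Real.cosh_add_sinh t]

lemma cavity_update [Fintype V] [DecidableEq V] (J : V → V → ℝ) (h : V → ℝ)
    (σ : V → Bool) (x y : V) (hyx : y ≠ x) :
    cavity J h (Function.update σ x (!σ x)) y =
      cavity J h σ y + J y x * (sp (!σ x) - sp (σ x)) := by
  unfold cavity
  have : ∑ z, J y z * sp (Function.update σ x (!σ x) z)
      = ∑ z, (J y z * sp (σ z) + (if z = x then J y x * (sp (!σ x) - sp (σ x)) else 0)) := by
    apply Finset.sum_congr rfl
    intro z _
    by_cases hz : z = x
    · subst hz; simp [Function.update_self]; ring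
    · simp [Function.update_of_ne hz, hz]
  rw [this, Finset.sum_add_distrib, Finset.sum_ite_eq' Finset.univ x
    (fun _ => J y x * (sp (!σ x) - sp (σ x)))]
  simp
  ring

/-- for every y ≠ x, the ε-SCA local transition probabilities of σ and of
σ^x (σ with the spin at x flipped) satisfy
`|p̃_{y,ε}(+1 | σ) − p̃_{y,ε}(+1 | σ^x)| ≤ ε · tanh(β |J_{x,y}| / 2)`. -/
theorem abs_ptilde_sub_ptilde_flip_le [Fintype V] [DecidableEq V]
    (G : SimpleGraph V) (J : V → V → ℝ) (h : V → ℝ)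
    (hsym : ∀ x y, J x y = J y x)
    (hJG : ∀ x y, ¬ G.Adj x y → J x y = 0)
    (β : ℝ) (hβ : 0 ≤ β) (ε : ℝ) (hε : ε ∈ Set.Ioc (0 : ℝ) 1)
    (σ : V → Bool) (x y : V) (hyx : y ≠ x) :
    |ptilde J h β ε σ y true - ptilde J h β ε (Function.update σ x (!σ x)) y true| ≤
      ε * Real.tanh (β * |J x y| / 2) := by
  set σ' := Function.update σ x (!σ x) with hσ'
  have hy : σ' y = σ y := Function.update_of_ne hyx _ _
  set t := (β / 2) * cavity J h σ y with ht
  set t' := (β / 2) * cavity J h σ' y with ht'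
  have hcav := cavity_update J h σ x y hyx
  have hd : |t - t'| = β * |J x y| := by
    have he : t - t' = (β / 2) * (J y x * (sp (σ x) - sp (!σ x))) := by
      rw [ht, ht', hcav]; ring
    have hs : |sp (σ x) - sp (!σ x)| = 2 := by
      cases hb : σ x <;> simp [sp] <;> norm_num
    rw [he, abs_mul, abs_mul, hs, abs_of_nonneg (by positivity : (0:ℝ) ≤ β / 2),
      ← hsym x y]
    ring
  have key : ptilde J h β ε σ y true - ptilde J h β ε σ' y true
      = ε * (Real.tanh t - Real.tanh t') / 2 := by
    unfold ptilde
    rw [plocal_true_eq, plocal_true_eq, hy, ← ht, ← ht']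
    ring
  rw [key]
  have hεpos := hε.1
  calc |ε * (Real.tanh t - Real.tanh t') / 2|
      = ε / 2 * |Real.tanh t - Real.tanh t'| := by
        rw [abs_div, abs_mul, abs_of_nonneg hεpos.le]
        norm_num
        ring
    _ ≤ ε / 2 * (2 * Real.tanh (|t - t'| / 2)) := by
        exact mul_le_mul_of_nonneg_left (abs_tanh_sub_le' t t') (by positivity)
    _ = ε * Real.tanh (β * |J x y| / 2) := by
        rw [hd]; ring
end
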